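/- Adoption-free equilibrium (Proposition 2): assume I − ΛW̃ is invertible, set x* := (I − ΛW̃)^{−1}(I − Λ − Ξ) x⁰, and assume γ_j x*_j + θ_j (1 − x*_j) > 0 for all j. Then the point (a, d, x) = (0, Ψ(x*), x*), where Ψ(x*)_j := θ_j (1 − x*_j) / (γ_j x*_j + θ_j (1 − x*_j)), is an equilibrium of the coupled adoption–opinion model: the admissible trajectory with a(0) = 0, d(0) = Ψ(x*), x(0) = x* satisfies a(t) = 0, d(t) = Ψ(x*), x(t) = x* for all t ∈ ℕ. -/

import Mathlib

open Matrix

/-- Adoption-free equilibrium (Proposition 2): the point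
`(0, Ψ(x*), x*)` is an equilibrium of the coupled adoption–opinion model. -/
theorem adoption_free_equilibrium
    (n : ℕ) (hn : 1 ≤ n)
    (β γ θ δ : Fin n → ℝ)
    (hβ : ∀ j, β j ∈ Set.Icc (0 : ℝ) 1) (hγ : ∀ j, γ j ∈ Set.Icc (0 : ℝ) 1)
    (hθ : ∀ j, θ j ∈ Set.Icc (0 : ℝ) 1) (hδ : ∀ j, δ j ∈ Set.Icc (0 : ℝ) 1)
    (W Wt : Matrix (Fin n) (Fin n) ℝ)
    (hW0 : ∀ j k, 0 ≤ W j k) (hW1 : ∀ j, ∑ k, W j k = 1)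
    (hWt0 : ∀ j k, 0 ≤ Wt j k) (hWt1 : ∀ j, ∑ k, Wt j k = 1)
    (lam ξ : Fin n → ℝ)
    (hlam : ∀ j, 0 ≤ lam j) (hξ : ∀ j, 0 ≤ ξ j)
    (hlamξ : ∀ j, lam j + ξ j ≤ 1)
    (x0 : Fin n → ℝ) (hx0 : ∀ j, x0 j ∈ Set.Icc (0 : ℝ) 1)
    (hinv : IsUnit (1 - Matrix.diagonal lam * Wt))
    (xstar : Fin n → ℝ)
    (hxstar : xstar =
        ((1 - Matrix.diagonal lam * Wt)⁻¹
          * (1 - Matrix.diagonal lam - Matrix.diagonal ξ)) *ᵥ x0)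
    (hpos : ∀ j, 0 < γ j * xstar j + θ j * (1 - xstar j))
    (Psi : Fin n → ℝ)
    (hPsi : ∀ j, Psi j = θ j * (1 - xstar j) / (γ j * xstar j + θ j * (1 - xstar j)))
    -- the admissible trajectory starting at (0, Ψ(x*), x*)
    (a d x : ℕ → Fin n → ℝ)
    (ha0 : ∀ j, a 0 j ∈ Set.Icc (0 : ℝ) 1) (hd0 : ∀ j, d 0 j ∈ Set.Icc (0 : ℝ) 1)
    (had0 : ∀ j, a 0 j + d 0 j ≤ 1) (hx00 : ∀ j, x 0 j ∈ Set.Icc (0 : ℝ) 1)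
    (hrec_a : ∀ t j, a (t + 1) j = a t j
        + β j * x t j * (1 - a t j - d t j) * (∑ k, W j k * a t k) - δ j * a t j)
    (hrec_d : ∀ t j, d (t + 1) j = d t j - γ j * x t j * d t j
        + θ j * (1 - x t j) * (1 - a t j - d t j) + δ j * a t j)
    (hrec_x : ∀ t j, x (t + 1) j = (1 - lam j - ξ j) * x0 j
        + lam j * (∑ k, Wt j k * x t k) + ξ j * (∑ k, W j k * a t k))
    (hinit_a : ∀ j, a 0 j = 0) (hinit_d : ∀ j, d 0 j = Psi j)
    (hinit_x : ∀ j, x 0 j = xstar j) :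
    ∀ t, (∀ j, a t j = 0) ∧ (∀ j, d t j = Psi j) ∧ (∀ j, x t j = xstar j) := by

  -- fixed point equation for xstar
  have hdet : IsUnit (1 - Matrix.diagonal lam * Wt).det :=
    (Matrix.isUnit_iff_isUnit_det _).mp hinv
  have hfix : (1 - Matrix.diagonal lam * Wt) *ᵥ xstar
      = (1 - Matrix.diagonal lam - Matrix.diagonal ξ) *ᵥ x0 := by
    rw [hxstar, Matrix.mulVec_mulVec, ← mul_assoc,
      Matrix.mul_nonsing_inv _ hdet, one_mul]
  have hfixj : ∀ j, xstar j - lam j * (∑ k, Wt j k * xstar k)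
      = (1 - lam j - ξ j) * x0 j := by
    intro j
    have h := congrFun hfix j
    simp [Matrix.mulVec, dotProduct, Matrix.sub_apply, Matrix.mul_apply, Matrix.one_apply,
      Matrix.diagonal_apply, ite_mul, zero_mul, sub_mul, Finset.sum_sub_distrib,
      Finset.mul_sum, mul_assoc] at h
    rw [Finset.mul_sum]
    linarith
  have hPsifix : ∀ j, Psi j - γ j * xstar j * Psi j
      + θ j * (1 - xstar j) * (1 - Psi j) = Psi j := by
    intro j
    have h := hpos j
    have hP : Psi j * (γ j * xstar j + θ j * (1 - xstar j)) = θ j * (1 - xstar j) := by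
      rw [hPsi j]; exact div_mul_cancel₀ _ (ne_of_gt h)
    nlinarith [hP]
  intro t
  induction t with
  | zero => exact ⟨hinit_a, hinit_d, hinit_x⟩
  | succ t ih =>
    obtain ⟨iha, ihd, ihx⟩ := ih
    have hWa : ∀ j, (∑ k, W j k * a t k) = 0 := by
      intro j; simp [iha]
    refine ⟨?_, ?_, ?_⟩
    · intro j; rw [hrec_a t j, iha j, hWa j]; ring
    · intro j
      rw [hrec_d t j, iha j, ihd j, ihx j]
      have := hPsifix j
      ring_nf
      ring_nf at this
      linarith
    · intro j
      rw [hrec_x t j, hWa j]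
      have h1 : (∑ k, Wt j k * x t k) = ∑ k, Wt j k * xstar k := by
        apply Finset.sum_congr rfl; intro k _; rw [ihx k]
      rw [h1]
      have := hfixj j
      linarith
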